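/- Let p be an odd prime, m ≥ ν ≥ 1, and α, β integers coprime to p. If f̂(x) = p² + p^{m−ν+1}βx + αx² is reducible as a polynomial over ℤ_p, then f(x) = p^{2ν} + pᵐβx + αx² is reducible in ℤ[[x]]. -/

import Mathlib

section Extraction
open Polynomial

private lemma exists_cd (p : ℕ) [Fact p.Prime] (ν m : ℕ) (α β : ℤ)
    (hα : Int.gcd (p : ℤ) α = 1)
    (h : ∃ a b : Polynomial ℤ_[p], ¬ IsUnit a ∧ ¬ IsUnit b ∧
      Polynomial.C ((p : ℤ_[p]) ^ 2) +
        Polynomial.C ((p : ℤ_[p]) ^ (m - ν + 1) * (β : ℤ_[p])) * Polynomial.X +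
        Polynomial.C (α : ℤ_[p]) * Polynomial.X ^ 2 = a * b) :
    ∃ c d : ℤ_[p], c + d = (p : ℤ_[p]) ^ (m - ν) * (β : ℤ_[p]) ∧ c * d = (α : ℤ_[p]) := by
  have hp : p.Prime := Fact.out
  have hpp : Prime (p : ℤ_[p]) := PadicInt.prime_p
  -- α is a unit in ℤ_p
  have hpdvd : ¬ ((p : ℤ) ∣ α) := by
    intro hd
    have h1 : (p : ℤ) ∣ Int.gcd (p : ℤ) α := Int.dvd_coe_gcd dvd_rfl hd
    rw [hα] at h1
    have := Int.le_of_dvd one_pos h1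
    have := hp.two_le
    omega
  have hαu : IsUnit (α : ℤ_[p]) := by
    rw [PadicInt.isUnit_iff]
    have h1 : ¬ ‖(α : ℤ_[p])‖ < 1 := by
      rw [PadicInt.norm_int_lt_one_iff_dvd]; exact hpdvd
    exact le_antisymm (PadicInt.norm_le_one _) (not_lt.mp h1)
  have hαne : (α : ℤ_[p]) ≠ 0 := hαu.ne_zero
  have hdvd_unit : ∀ z : ℤ_[p], ¬ (p : ℤ_[p]) ∣ z → IsUnit z := by
    intro z hz
    by_contra hu
    rw [PadicInt.not_isUnit_iff, PadicInt.norm_lt_one_iff_dvd] at hu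
    exact hz hu
  obtain ⟨a, b, hna, hnb, heq⟩ := h
  have hqform : Polynomial.C ((p : ℤ_[p]) ^ 2) +
        Polynomial.C ((p : ℤ_[p]) ^ (m - ν + 1) * (β : ℤ_[p])) * Polynomial.X +
        Polynomial.C (α : ℤ_[p]) * Polynomial.X ^ 2
      = Polynomial.C (α : ℤ_[p]) * X ^ 2 +
        Polynomial.C ((p : ℤ_[p]) ^ (m - ν + 1) * (β : ℤ_[p])) * X +
        Polynomial.C ((p : ℤ_[p]) ^ 2) := by ring
  rw [hqform] at heq
  have hqdeg : (Polynomial.C (α : ℤ_[p]) * X ^ 2 +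
        Polynomial.C ((p : ℤ_[p]) ^ (m - ν + 1) * (β : ℤ_[p])) * X +
        Polynomial.C ((p : ℤ_[p]) ^ 2)).natDegree = 2 :=
    Polynomial.natDegree_quadratic hαne
  have hcoeff2 : (Polynomial.C (α : ℤ_[p]) * X ^ 2 +
        Polynomial.C ((p : ℤ_[p]) ^ (m - ν + 1) * (β : ℤ_[p])) * X +
        Polynomial.C ((p : ℤ_[p]) ^ 2)).coeff 2 = (α : ℤ_[p]) := by
    simp only [Polynomial.coeff_add, Polynomial.coeff_C_mul, Polynomial.coeff_X_pow,
      Polynomial.coeff_C, Polynomial.coeff_X]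
    norm_num
  have hane : a ≠ 0 := by
    intro h0; rw [h0, zero_mul] at heq
    rw [heq] at hcoeff2; simp at hcoeff2; exact hαne hcoeff2.symm
  have hbne : b ≠ 0 := by
    intro h0; rw [h0, mul_zero] at heq
    rw [heq] at hcoeff2; simp at hcoeff2; exact hαne hcoeff2.symm
  have hdegsum : a.natDegree + b.natDegree = 2 := by
    rw [← Polynomial.natDegree_mul hane hbne, ← heq, hqdeg]
  -- neither factor is a constant
  have hdeg_a_ne : a.natDegree ≠ 0 := by
    intro h0
    have ha' : a = Polynomial.C (a.coeff 0) := Polynomial.eq_C_of_natDegree_eq_zero h0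
    have h2 : (α : ℤ_[p]) = a.coeff 0 * b.coeff 2 := by
      conv_lhs => rw [← hcoeff2, heq, ha']
      rw [Polynomial.coeff_C_mul]
    apply hna
    rw [ha']
    exact Polynomial.isUnit_C.mpr (isUnit_of_mul_isUnit_left (h2 ▸ hαu))
  have hdeg_b_ne : b.natDegree ≠ 0 := by
    intro h0
    have hb' : b = Polynomial.C (b.coeff 0) := Polynomial.eq_C_of_natDegree_eq_zero h0
    have h2 : (α : ℤ_[p]) = b.coeff 0 * a.coeff 2 := by
      conv_lhs => rw [← hcoeff2, heq, hb', mul_comm a]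
      rw [Polynomial.coeff_C_mul]
    apply hnb
    rw [hb']
    exact Polynomial.isUnit_C.mpr (isUnit_of_mul_isUnit_left (h2 ▸ hαu))
  have hdeg_a : a.natDegree = 1 := by omega
  have hdeg_b : b.natDegree = 1 := by omega
  set a1 := a.coeff 1
  set a0 := a.coeff 0
  set b1 := b.coeff 1
  set b0 := b.coeff 0
  have ha' : a = Polynomial.C a1 * X + Polynomial.C a0 :=
    Polynomial.eq_X_add_C_of_natDegree_le_one (by omega)
  have hb' : b = Polynomial.C b1 * X + Polynomial.C b0 :=
    Polynomial.eq_X_add_C_of_natDegree_le_one (by omega)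
  have hexp : a * b = Polynomial.C (a1 * b1) * X ^ 2 +
      Polynomial.C (a1 * b0 + a0 * b1) * X + Polynomial.C (a0 * b0) := by
    rw [ha', hb']
    simp only [map_mul, map_add]
    ring
  rw [hexp] at heq
  have e2 : (α : ℤ_[p]) = a1 * b1 := by
    have h3 := congrArg (fun f => Polynomial.coeff f 2) heq
    simp only [Polynomial.coeff_add, Polynomial.coeff_C_mul, Polynomial.coeff_X_pow,
      Polynomial.coeff_C, Polynomial.coeff_X] at h3
    norm_num at h3
    exact h3
  have e1 : (p : ℤ_[p]) ^ (m - ν + 1) * (β : ℤ_[p]) = a1 * b0 + a0 * b1 := by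
    have h3 := congrArg (fun f => Polynomial.coeff f 1) heq
    simp only [Polynomial.coeff_add, Polynomial.coeff_C_mul, Polynomial.coeff_X_pow,
      Polynomial.coeff_C, Polynomial.coeff_X] at h3
    norm_num at h3
    exact h3
  have e0 : (p : ℤ_[p]) ^ 2 = a0 * b0 := by
    have h3 := congrArg (fun f => Polynomial.coeff f 0) heq
    simp only [Polynomial.coeff_add, Polynomial.coeff_C_mul, Polynomial.coeff_X_pow,
      Polynomial.coeff_C, Polynomial.coeff_X] at h3
    norm_num at h3
    exact h3
  have hu1 : IsUnit a1 := isUnit_of_mul_isUnit_left (e2 ▸ hαu)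
  have hu2 : IsUnit b1 := isUnit_of_mul_isUnit_right (e2 ▸ hαu)
  have hpd1 : (p : ℤ_[p]) ∣ (p : ℤ_[p]) ^ (m - ν + 1) * (β : ℤ_[p]) :=
    Dvd.dvd.mul_right (dvd_pow_self _ (Nat.succ_ne_zero _)) _
  have hpdab : (p : ℤ_[p]) ∣ a0 * b0 := by
    rw [← e0]; exact dvd_pow_self _ two_ne_zero
  have hpa0 : (p : ℤ_[p]) ∣ a0 := by
    rcases hpp.dvd_mul.mp hpdab with h1 | h1
    · exact h1
    · -- p ∣ b0, so p ∣ a1*b0, so p ∣ a0*b1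
      have h2 : (p : ℤ_[p]) ∣ a0 * b1 := by
        have : a0 * b1 = (p : ℤ_[p]) ^ (m - ν + 1) * (β : ℤ_[p]) - a1 * b0 := by
          rw [e1]; ring
        rw [this]
        exact dvd_sub hpd1 (Dvd.dvd.mul_left h1 _)
      rcases hpp.dvd_mul.mp h2 with h3 | h3
      · exact h3
      · exact absurd (isUnit_of_dvd_unit h3 hu2) hpp.not_unit
  have hpb0 : (p : ℤ_[p]) ∣ b0 := by
    rcases hpp.dvd_mul.mp hpdab with h1 | h1
    swap
    · exact h1
    · have h2 : (p : ℤ_[p]) ∣ a1 * b0 := by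
        have : a1 * b0 = (p : ℤ_[p]) ^ (m - ν + 1) * (β : ℤ_[p]) - a0 * b1 := by
          rw [e1]; ring
        rw [this]
        exact dvd_sub hpd1 (Dvd.dvd.mul_right h1 _)
      rcases hpp.dvd_mul.mp h2 with h3 | h3
      · exact absurd (isUnit_of_dvd_unit h3 hu1) hpp.not_unit
      · exact h3
  obtain ⟨s, hs⟩ := hpa0
  obtain ⟨t, ht⟩ := hpb0
  have hpne : (p : ℤ_[p]) ≠ 0 := Nat.cast_ne_zero.mpr hp.ne_zero
  have hst : s * t = 1 := by
    have h1 : (p : ℤ_[p]) ^ 2 * (s * t) = (p : ℤ_[p]) ^ 2 * 1 := by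
      calc (p : ℤ_[p]) ^ 2 * (s * t) = ((p : ℤ_[p]) * s) * ((p : ℤ_[p]) * t) := by ring
        _ = a0 * b0 := by rw [hs, ht]
        _ = (p : ℤ_[p]) ^ 2 := e0.symm
        _ = (p : ℤ_[p]) ^ 2 * 1 := (mul_one _).symm
    exact mul_left_cancel₀ (pow_ne_zero _ hpne) h1
  refine ⟨a1 * t, b1 * s, ?_, ?_⟩
  · have h1 : (p : ℤ_[p]) * (a1 * t + b1 * s) =
        (p : ℤ_[p]) * ((p : ℤ_[p]) ^ (m - ν) * (β : ℤ_[p])) := by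
      have lhs : (p : ℤ_[p]) * (a1 * t + b1 * s) = a1 * b0 + a0 * b1 := by
        rw [hs, ht]; ring
      rw [lhs, ← e1, pow_succ]
      ring
    exact mul_left_cancel₀ hpne h1
  · calc a1 * t * (b1 * s) = a1 * b1 * (s * t) := by ring
      _ = (α : ℤ_[p]) := by rw [hst, ← e2, mul_one]

end Extraction

section Construction
open PowerSeries

private lemma pd_dvd {p : ℕ} [Fact p.Prime] (ν : ℕ) (x : ℤ_[p]) :
    (p : ℤ_[p]) ^ ν ∣ ((x.appr ν : ℤ_[p]) - x) := by
  have := PadicInt.appr_spec ν x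
  rw [Ideal.mem_span_singleton] at this
  exact dvd_sub_comm.mp this

private noncomputable def pd {p : ℕ} [Fact p.Prime] (ν : ℕ) (c : ℤ_[p]) : ℕ → ℤ_[p]
  | 0 => 1
  | n + 1 => (pd_dvd ν (c * pd ν c n)).choose

private lemma pd_spec {p : ℕ} [Fact p.Prime] (ν : ℕ) (c : ℤ_[p]) (n : ℕ) :
    (((c * pd ν c n).appr ν : ℤ_[p])) = (p : ℤ_[p]) ^ ν * pd ν c (n + 1) + c * pd ν c n := by
  have h := (pd_dvd ν (c * pd ν c n)).choose_spec
  rw [show pd ν c (n+1) = (pd_dvd ν (c * pd ν c n)).choose from rfl, ← h]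
  ring

private noncomputable def aseq {p : ℕ} [Fact p.Prime] (ν : ℕ) (c : ℤ_[p]) : ℕ → ℤ
  | 0 => (p : ℤ) ^ ν
  | n + 1 => ((c * pd ν c n).appr ν : ℤ)

private lemma construct (p : ℕ) [Fact p.Prime] (ν m : ℕ)
    (hν : 1 ≤ ν) (hm : ν ≤ m) (α β : ℤ)
    (c d : ℤ_[p]) (hsum : c + d = (p : ℤ_[p]) ^ (m - ν) * (β : ℤ_[p]))
    (hprod : c * d = (α : ℤ_[p])) :
    ∃ a b : PowerSeries ℤ, ¬ IsUnit a ∧ ¬ IsUnit b ∧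
      (PowerSeries.C (R := ℤ)) ((p : ℤ) ^ (2 * ν)) +
        (PowerSeries.C (R := ℤ)) ((p : ℤ) ^ m * β) * PowerSeries.X +
        (PowerSeries.C (R := ℤ)) α * PowerSeries.X ^ 2 = a * b := by
  have hp : p.Prime := Fact.out
  have hpne : (p : ℤ_[p]) ≠ 0 := Nat.cast_ne_zero.mpr hp.ne_zero
  have hppow : (p : ℤ_[p]) ^ ν ≠ 0 := pow_ne_zero _ hpne
  set ρ : ℤ →+* ℤ_[p] := Int.castRingHom ℤ_[p] with hρ
  set U : ℤ_[p]⟦X⟧ := PowerSeries.mk (pd ν c) with hUdef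
  have hU : IsUnit U := by
    rw [PowerSeries.isUnit_iff_constantCoeff]
    simp [hUdef, pd]
  set V : ℤ_[p]⟦X⟧ˣ := hU.unit with hV
  have hVU : (V : ℤ_[p]⟦X⟧) = U := hU.unit_spec
  set Az : PowerSeries ℤ := PowerSeries.mk (aseq ν c) with hAz
  set Ap : ℤ_[p]⟦X⟧ := PowerSeries.map ρ Az with hApdef
  -- A_p = (C p^ν + C c X) * U
  have hAp : Ap = (PowerSeries.C ((p : ℤ_[p]) ^ ν) + PowerSeries.C c * X) * U := by
    ext n
    rw [add_mul, mul_assoc, map_add, PowerSeries.coeff_C_mul, PowerSeries.coeff_C_mul]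
    cases n with
    | zero =>
        simp [hApdef, hAz, hUdef, aseq, pd, mul_comm]
    | succ k =>
        rw [show (X : ℤ_[p]⟦X⟧) * U = U * X from mul_comm _ _,
          PowerSeries.coeff_succ_mul_X]
        simp only [hApdef, hAz, hUdef, PowerSeries.coeff_map, PowerSeries.coeff_mk]
        show ρ (aseq ν c (k+1)) = _
        simp only [aseq, hρ, eq_intCast, Int.cast_natCast]
        rw [pd_spec ν c k]
  set W : ℤ_[p]⟦X⟧ := ((V⁻¹ : ℤ_[p]⟦X⟧ˣ) : ℤ_[p]⟦X⟧) with hWdef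
  have hUW : U * W = 1 := by rw [hWdef, ← hVU]; exact Units.mul_inv V
  set Bp : ℤ_[p]⟦X⟧ := (PowerSeries.C ((p : ℤ_[p]) ^ ν) + PowerSeries.C d * X) *
      W with hBpdef
  set F : PowerSeries ℤ := (PowerSeries.C (R := ℤ)) ((p : ℤ) ^ (2 * ν)) +
        (PowerSeries.C (R := ℤ)) ((p : ℤ) ^ m * β) * PowerSeries.X +
        (PowerSeries.C (R := ℤ)) α * PowerSeries.X ^ 2 with hF
  have hpm : (p : ℤ_[p]) ^ ν * (p : ℤ_[p]) ^ (m - ν) = (p : ℤ_[p]) ^ m := by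
    rw [← pow_add, Nat.add_sub_cancel' hm]
  have hmulF : Ap * Bp = PowerSeries.map ρ F := by
    have hr1 : ρ ((p:ℤ)^(2*ν)) = (p:ℤ_[p])^ν * (p:ℤ_[p])^ν := by
      rw [hρ]; simp only [eq_intCast]; push_cast; rw [← pow_add, two_mul]
    have hr2 : ρ ((p:ℤ)^m * β) = (p:ℤ_[p])^ν * (c + d) := by
      rw [hρ]; simp only [eq_intCast]; push_cast; rw [hsum, ← mul_assoc, hpm]
    have hr3 : ρ (α:ℤ) = c * d := by
      rw [hρ]; simp only [eq_intCast]; rw [hprod]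
    have expand : PowerSeries.map ρ F =
        PowerSeries.C ((p:ℤ_[p])^ν * (p:ℤ_[p])^ν) +
          PowerSeries.C ((p:ℤ_[p])^ν * (c+d)) * X +
          PowerSeries.C (c*d) * X^2 := by
      rw [hF, map_add, map_add,
        map_mul (PowerSeries.map ρ) ((PowerSeries.C (R := ℤ)) ((p:ℤ)^m * β)) X,
        map_mul (PowerSeries.map ρ) ((PowerSeries.C (R := ℤ)) α) (X^2),
        PowerSeries.map_C, PowerSeries.map_C, PowerSeries.map_C,
        PowerSeries.map_X, map_pow (PowerSeries.map ρ) (X : PowerSeries ℤ) 2,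
        PowerSeries.map_X, hr1, hr2, hr3]
    rw [hAp, hBpdef, expand]
    have step : (PowerSeries.C ((p:ℤ_[p]) ^ ν) + PowerSeries.C c * X) * U *
        ((PowerSeries.C ((p:ℤ_[p]) ^ ν) + PowerSeries.C d * X) * W)
        = (PowerSeries.C ((p:ℤ_[p]) ^ ν) + PowerSeries.C c * X) *
          (PowerSeries.C ((p:ℤ_[p]) ^ ν) + PowerSeries.C d * X) *
          (U * W) := by ring
    rw [step, hUW, mul_one]
    simp only [map_mul, map_add]
    ring
  -- integrality of coefficients of Bp
  have hint : ∀ n, (PowerSeries.coeff (R := ℤ_[p]) n) Bp ∈ ρ.range := by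
    intro n
    induction n using Nat.strong_induction_on with
    | _ n ih =>
      have hco := congrArg (PowerSeries.coeff (R := ℤ_[p]) n) hmulF
      rw [PowerSeries.coeff_mul] at hco
      have hmem : ((0 : ℕ), n) ∈ Finset.HasAntidiagonal.antidiagonal n := by simp
      rw [← Finset.add_sum_erase _ _ hmem] at hco
      have hA0 : (PowerSeries.coeff (R := ℤ_[p]) 0) Ap = (p : ℤ_[p]) ^ ν := by
        simp [hApdef, hAz, aseq]
      rw [hA0] at hco
      have hsum_mem : ∑ x ∈ (Finset.HasAntidiagonal.antidiagonal n).erase (0, n),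
          (PowerSeries.coeff (R := ℤ_[p]) x.1) Ap * (PowerSeries.coeff (R := ℤ_[p]) x.2) Bp ∈ ρ.range := by
        apply Subring.sum_mem
        intro x hx
        have hx1 := Finset.mem_of_mem_erase hx
        rw [Finset.HasAntidiagonal.mem_antidiagonal] at hx1
        have hxne : x ≠ (0, n) := Finset.ne_of_mem_erase hx
        have hx2 : x.2 < n := by
          rcases Nat.eq_zero_or_pos x.1 with h0 | h0
          · exfalso; apply hxne
            have : x.2 = n := by omega
            exact Prod.ext h0 this
          · omega
        exact Subring.mul_mem _ ⟨_, rfl⟩ (ih _ hx2)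
      have hrange : (p : ℤ_[p]) ^ ν * (PowerSeries.coeff (R := ℤ_[p]) n) Bp ∈ ρ.range := by
        have : (p : ℤ_[p]) ^ ν * (PowerSeries.coeff (R := ℤ_[p]) n) Bp =
            (PowerSeries.coeff (R := ℤ_[p]) n) (PowerSeries.map ρ F) -
            ∑ x ∈ (Finset.HasAntidiagonal.antidiagonal n).erase (0, n),
              (PowerSeries.coeff (R := ℤ_[p]) x.1) Ap * (PowerSeries.coeff (R := ℤ_[p]) x.2) Bp := by
          rw [← hco]; ring
        rw [this, PowerSeries.coeff_map]
        exact Subring.sub_mem _ ⟨_, rfl⟩ hsum_mem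
      obtain ⟨z, hz⟩ := hrange
      have hdvd : ((p : ℤ) ^ ν) ∣ z := by
        rw [← PadicInt.norm_int_le_pow_iff_dvd]
        rw [show ((z : ℤ) : ℤ_[p]) = (p : ℤ_[p]) ^ ν * (PowerSeries.coeff (R := ℤ_[p]) n) Bp from hz]
        calc ‖(p : ℤ_[p]) ^ ν * (PowerSeries.coeff (R := ℤ_[p]) n) Bp‖
            ≤ ‖(p : ℤ_[p]) ^ ν‖ * 1 := by
              rw [norm_mul]
              exact mul_le_mul_of_nonneg_left (PadicInt.norm_le_one _) (norm_nonneg _)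
          _ = (p : ℝ) ^ (-(ν : ℤ)) := by rw [mul_one, PadicInt.norm_p_pow]
      obtain ⟨w, hw⟩ := hdvd
      refine ⟨w, ?_⟩
      have heqw : (p : ℤ_[p]) ^ ν * (w : ℤ_[p]) = (p : ℤ_[p]) ^ ν * (PowerSeries.coeff (R := ℤ_[p]) n) Bp := by
        rw [← hz, hw, hρ]
        simp only [eq_intCast]
        push_cast
        ring
      have := mul_left_cancel₀ hppow heqw
      rw [hρ]; simpa using this
  -- the integer series b
  choose b hb using hint
  set Bz : PowerSeries ℤ := PowerSeries.mk b with hBz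
  have hmapB : PowerSeries.map ρ Bz = Bp := by
    ext n
    rw [PowerSeries.coeff_map]
    simp only [hBz, PowerSeries.coeff_mk]
    exact hb n
  have hmapA : PowerSeries.map ρ Az = Ap := rfl
  have hinj : Function.Injective (PowerSeries.map ρ) := by
    intro x y hxy
    ext n
    have := congrArg (PowerSeries.coeff (R := ℤ_[p]) n) hxy
    rw [PowerSeries.coeff_map, PowerSeries.coeff_map, hρ] at this
    simp only [eq_intCast] at this
    exact_mod_cast this
  have hfactor : F = Az * Bz := by
    apply hinj
    rw [map_mul, hmapA, hmapB, hmulF]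
  -- nonunits
  have hpunit : ¬ IsUnit ((p : ℤ) ^ ν) := by
    intro hu
    have := Int.isUnit_iff.mp ((isUnit_pow_iff (by omega : ν ≠ 0)).mp hu)
    have h2 := hp.two_le
    omega
  have hnA : ¬ IsUnit Az := by
    intro hu
    have := hu.map (PowerSeries.constantCoeff (R := ℤ))
    apply hpunit
    simpa [hAz, aseq] using this
  have hb0 : b 0 = (p : ℤ) ^ ν := by
    have h0 : ((b 0 : ℤ) : ℤ_[p]) = (PowerSeries.coeff (R := ℤ_[p]) 0) Bp := hb 0
    have hc1 : (PowerSeries.constantCoeff (R := ℤ_[p])) ((V⁻¹ : ℤ_[p]⟦X⟧ˣ) : ℤ_[p]⟦X⟧) = 1 := by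
      have h1 : (PowerSeries.constantCoeff (R := ℤ_[p])) ((V : ℤ_[p]⟦X⟧) * ↑V⁻¹) = 1 := by
        rw [Units.mul_inv]; exact map_one _
      rw [map_mul] at h1
      have : (PowerSeries.constantCoeff (R := ℤ_[p])) (V : ℤ_[p]⟦X⟧) = 1 := by
        rw [hVU]; simp [hUdef, pd]
      rwa [this, one_mul] at h1
    have : (PowerSeries.coeff (R := ℤ_[p]) 0) Bp = (p : ℤ_[p]) ^ ν := by
      rw [hBpdef, PowerSeries.coeff_zero_eq_constantCoeff, map_mul, hc1, mul_one]
      simp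
    rw [this] at h0
    have : ((b 0 : ℤ) : ℤ_[p]) = (((p : ℤ) ^ ν : ℤ) : ℤ_[p]) := by rw [h0]; push_cast; ring
    exact_mod_cast this
  have hnB : ¬ IsUnit Bz := by
    intro hu
    have := hu.map (PowerSeries.constantCoeff (R := ℤ))
    apply hpunit
    simpa [hBz, hb0] using this
  exact ⟨Az, Bz, hnA, hnB, hfactor⟩

end Construction

theorem stmt_12 (p : ℕ) [Fact p.Prime] (hodd : Odd p) (ν m : ℕ)
    (hν : 1 ≤ ν) (hm : ν ≤ m) (α β : ℤ)
    (hα : Int.gcd (p : ℤ) α = 1) (hβ : Int.gcd (p : ℤ) β = 1)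
    (h : ∃ a b : Polynomial ℤ_[p], ¬ IsUnit a ∧ ¬ IsUnit b ∧
      Polynomial.C ((p : ℤ_[p]) ^ 2) +
        Polynomial.C ((p : ℤ_[p]) ^ (m - ν + 1) * (β : ℤ_[p])) * Polynomial.X +
        Polynomial.C (α : ℤ_[p]) * Polynomial.X ^ 2 = a * b) :
    ∃ a b : PowerSeries ℤ, ¬ IsUnit a ∧ ¬ IsUnit b ∧
      (PowerSeries.C (R := ℤ)) ((p : ℤ) ^ (2 * ν)) +
        (PowerSeries.C (R := ℤ)) ((p : ℤ) ^ m * β) * PowerSeries.X +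
        (PowerSeries.C (R := ℤ)) α * PowerSeries.X ^ 2 = a * b := by
  obtain ⟨c, d, hsum, hprod⟩ := exists_cd p ν m α β hα h
  exact construct p ν m hν hm α β c d hsum hprod
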